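/- Let (a_n) be a sequence in R^d with ‖a_n‖ → 0. Then there exists a sign sequence ε ∈ {-1,1}^N such that the series ∑_{n=1}^∞ ε_n a_n converges. Moreover, there is a constant K depending only on d such that max_n ‖∑_{i=1}^n ε_i a_i‖ ≤ K · max_n ‖a_n‖. -/

import Mathlib

open Finset

/-- Invariant for the Bárány–Grinberg balancing process. -/
def BGGood (d : ℕ) (v : ℕ → EuclideanSpace ℝ (Fin d)) (n : ℕ) (y : ℕ → ℝ) : Prop :=
  (∀ i, |y i| ≤ 1) ∧ (∀ i, n ≤ i → y i = 0) ∧ (∑ i ∈ Finset.range n, y i • v i = 0) ∧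
    ((Finset.range n).filter (fun i => ¬(y i = 1 ∨ y i = -1))).card ≤ d

lemma bggood_zero (d : ℕ) (v : ℕ → EuclideanSpace ℝ (Fin d)) : BGGood d v 0 (fun _ => 0) := by
  refine ⟨fun i => by norm_num, fun i _ => rfl, by simp, by simp⟩

lemma dep_lemma' (d : ℕ) (F : Finset ℕ) (v : ℕ → EuclideanSpace ℝ (Fin d)) (hF : d < F.card) :
    ∃ c : ℕ → ℝ, (∀ i ∉ F, c i = 0) ∧ (∑ i ∈ F, c i • v i = 0) ∧ ∃ j ∈ F, c j ≠ 0 := by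
  have hnli : ¬ LinearIndependent ℝ (fun i : F => v i) := by
    intro h
    have := h.fintype_card_le_finrank
    rw [Fintype.card_coe, finrank_euclideanSpace_fin] at this
    omega
  obtain ⟨g, hg, i₀, hi₀⟩ := Fintype.not_linearIndependent_iff.mp hnli
  classical
  refine ⟨fun i => if h : i ∈ F then g ⟨i, h⟩ else 0, fun i hi => dif_neg hi, ?_, i₀, i₀.2, ?_⟩
  · rw [← Finset.sum_attach F (fun i => (if h : i ∈ F then g ⟨i, h⟩ else 0) • v i), ← hg]
    exact Finset.sum_congr rfl fun x _ => by rw [dif_pos x.2]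
  · simpa [dif_pos i₀.2] using hi₀

lemma bggood_step (d : ℕ) (v : ℕ → EuclideanSpace ℝ (Fin d)) (n : ℕ) (y : ℕ → ℝ)
    (h : BGGood d v n y) :
    ∃ y', BGGood d v (n + 1) y' ∧ ∀ i, (y i = 1 ∨ y i = -1) → y' i = y i := by
  classical
  obtain ⟨h1, h2, h3, h4⟩ := h
  have hyn : y n = 0 := h2 n le_rfl
  set F : Finset ℕ := (Finset.range (n+1)).filter (fun i => ¬(y i = 1 ∨ y i = -1)) with hFdef
  have hFn : n ∈ F := by
    simp only [hFdef, mem_filter, mem_range]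
    refine ⟨Nat.lt_succ_self n, ?_⟩
    rw [hyn]; norm_num
  have hFcard : F.card ≤ d + 1 := by
    have : F = insert n ((Finset.range n).filter (fun i => ¬(y i = 1 ∨ y i = -1))) := by
      rw [hFdef, Finset.range_add_one, Finset.filter_insert, if_pos]
      rw [hyn]; norm_num
    rw [this]
    calc _ ≤ _ + 1 := Finset.card_insert_le _ _
    _ ≤ d + 1 := by omega
  have hsum' : ∑ i ∈ Finset.range (n+1), y i • v i = 0 := by
    rw [Finset.sum_range_succ, hyn, zero_smul, add_zero, h3]
  by_cases hcard : F.card ≤ d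
  · exact ⟨y, ⟨h1, fun i hi => h2 i (by omega), hsum', hcard⟩, fun i _ => rfl⟩
  · have hFd : d < F.card := by omega
    obtain ⟨c, hc0, hcsum, j₀, hj₀F, hj₀⟩ := dep_lemma' d F v hFd
    set G : Finset ℕ := F.filter (fun i => c i ≠ 0) with hGdef
    have hj₀G : j₀ ∈ G := by simp [hGdef, hj₀F, hj₀]
    set σ : ℕ → ℝ := fun i => if 0 ≤ c i then 1 else -1 with hσdef
    set τ : ℕ → ℝ := fun i => (σ i - y i) / c i with hτdef
    obtain ⟨j, hjG, hjmin⟩ := Finset.exists_min_image G τ ⟨j₀, hj₀G⟩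
    have hcj : c j ≠ 0 := (Finset.mem_filter.mp hjG).2
    set t : ℝ := τ j with htdef
    -- t is nonnegative
    have hτnonneg : ∀ i ∈ G, 0 ≤ τ i := by
      intro i hiG
      have hci : c i ≠ 0 := (Finset.mem_filter.mp hiG).2
      have hyi := h1 i
      rw [abs_le] at hyi
      rcases lt_or_gt_of_ne hci with hneg | hpos
      · have : σ i = -1 := by simp [hσdef, not_le.mpr hneg]
        rw [hτdef]; dsimp only
        rw [this]
        exact div_nonneg_iff.mpr (Or.inr ⟨by linarith, le_of_lt hneg⟩)
      · have : σ i = 1 := by simp [hσdef, le_of_lt hpos]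
        rw [hτdef]; dsimp only
        rw [this]
        exact div_nonneg (by linarith) (le_of_lt hpos)
    have ht0 : 0 ≤ t := hτnonneg j hjG
    set y' : ℕ → ℝ := fun i => y i + t * c i with hy'def
    -- key pointwise bound
    have hbound : ∀ i, |y' i| ≤ 1 := by
      intro i
      by_cases hci : c i = 0
      · simp [hy'def, hci, h1 i]
      · have hiF : i ∈ F := by
          by_contra hiF
          exact hci (hc0 i hiF)
        have hiG : i ∈ G := by simp [hGdef, hiF, hci]
        have hti : t ≤ τ i := hjmin i hiG
        have hyi := h1 i
        rw [abs_le] at hyi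
        rw [abs_le, hy'def]
        rcases lt_or_gt_of_ne hci with hneg | hpos
        · have hσi : σ i = -1 := by simp [hσdef, not_le.mpr hneg]
          rw [hτdef] at hti; dsimp only at hti
          rw [hσi] at hti
          rw [le_div_iff_of_neg hneg] at hti
          constructor
          · dsimp only; nlinarith
          · dsimp only; nlinarith
        · have hσi : σ i = 1 := by simp [hσdef, le_of_lt hpos]
          rw [hτdef] at hti; dsimp only at hti
          rw [hσi, le_div_iff₀ hpos] at hti
          constructor
          · dsimp only; nlinarith
          · dsimp only; nlinarith
    have hy'j : y' j = σ j := by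
      rw [hy'def]; dsimp only
      rw [htdef, hτdef]; dsimp only
      field_simp
      ring
    have hy'j1 : y' j = 1 ∨ y' j = -1 := by
      rw [hy'j, hσdef]; dsimp only
      split <;> simp
    have hFsub : F ⊆ Finset.range (n+1) := Finset.filter_subset _ _
    refine ⟨y', ⟨hbound, ?_, ?_, ?_⟩, ?_⟩
    · intro i hi
      have hiF : i ∉ F := fun hmem => by
        have := hFsub hmem
        rw [Finset.mem_range] at this; omega
      rw [hy'def]; dsimp only
      rw [hc0 i hiF, h2 i (by omega)]; ring
    · rw [hy'def]
      have : ∑ i ∈ Finset.range (n+1), (y i + t * c i) • v i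
          = ∑ i ∈ Finset.range (n+1), y i • v i + t • ∑ i ∈ Finset.range (n+1), c i • v i := by
        rw [Finset.smul_sum, ← Finset.sum_add_distrib]
        apply Finset.sum_congr rfl
        intro i _
        rw [add_smul, smul_smul]
      rw [this, hsum']
      have : ∑ i ∈ Finset.range (n+1), c i • v i = ∑ i ∈ F, c i • v i := by
        symm
        apply Finset.sum_subset hFsub
        intro i _ hiF
        rw [hc0 i hiF, zero_smul]
      rw [this, hcsum, smul_zero, add_zero]
    · -- new fractional count
      have hsub : (Finset.range (n+1)).filter (fun i => ¬(y' i = 1 ∨ y' i = -1)) ⊆ F.erase j := by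
        intro i hi
        rw [Finset.mem_filter] at hi
        obtain ⟨hir, hifrac⟩ := hi
        rw [Finset.mem_erase]
        constructor
        · rintro rfl; exact hifrac hy'j1
        · by_contra hiF
          have hci : c i = 0 := hc0 i hiF
          have : y' i = y i := by rw [hy'def]; dsimp only; rw [hci]; ring
          rw [this] at hifrac
          exact hiF (by rw [hFdef]; exact Finset.mem_filter.mpr ⟨hir, hifrac⟩)
      calc ((Finset.range (n+1)).filter (fun i => ¬(y' i = 1 ∨ y' i = -1))).card
          ≤ (F.erase j).card := Finset.card_le_card hsub
        _ = F.card - 1 := Finset.card_erase_of_mem (Finset.mem_filter.mp hjG).1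
        _ ≤ d := by omega
    · intro i hyi
      have hiF : i ∉ F := by
        simp only [hFdef, Finset.mem_filter]
        rintro ⟨-, hfrac⟩
        exact hfrac hyi
      rw [hy'def]; dsimp only
      rw [hc0 i hiF]; ring

noncomputable def BGY (d : ℕ) (v : ℕ → EuclideanSpace ℝ (Fin d)) :
    (n : ℕ) → {y : ℕ → ℝ // BGGood d v n y}
  | 0 => ⟨fun _ => 0, bggood_zero d v⟩
  | n+1 => ⟨Classical.choose (bggood_step d v n (BGY d v n).1 (BGY d v n).2),
      (Classical.choose_spec (bggood_step d v n (BGY d v n).1 (BGY d v n).2)).1⟩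

lemma BGY_persist (d : ℕ) (v : ℕ → EuclideanSpace ℝ (Fin d)) (n i : ℕ)
    (h : (BGY d v n).1 i = 1 ∨ (BGY d v n).1 i = -1) :
    (BGY d v (n+1)).1 i = (BGY d v n).1 i := by
  have := (Classical.choose_spec (bggood_step d v n (BGY d v n).1 (BGY d v n).2)).2 i h
  simpa [BGY] using this

lemma BGY_persist_le (d : ℕ) (v : ℕ → EuclideanSpace ℝ (Fin d)) {m n i : ℕ} (hmn : m ≤ n)
    (h : (BGY d v m).1 i = 1 ∨ (BGY d v m).1 i = -1) :
    (BGY d v n).1 i = (BGY d v m).1 i := by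
  induction n with
  | zero =>
    have hm : m = 0 := by omega
    subst hm; rfl
  | succ k ih =>
    rcases Nat.lt_or_ge m (k+1) with hlt | hge
    · have hmk : m ≤ k := by omega
      have hk := ih hmk
      rw [BGY_persist d v k i (by rw [hk]; exact h), hk]
    · have : m = k + 1 := by omega
      subst this; rfl

open scoped Classical in
noncomputable def BGeps (d : ℕ) (v : ℕ → EuclideanSpace ℝ (Fin d)) (i : ℕ) : ℝ :=
  if h : ∃ n, ((BGY d v n).1 i = 1 ∨ (BGY d v n).1 i = -1)
  then (BGY d v (Nat.find h)).1 i else 1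

lemma BGeps_sign (d : ℕ) (v : ℕ → EuclideanSpace ℝ (Fin d)) (i : ℕ) :
    BGeps d v i = 1 ∨ BGeps d v i = -1 := by
  rw [BGeps]
  split
  · next h => exact Nat.find_spec h
  · left; rfl

lemma BGeps_agree (d : ℕ) (v : ℕ → EuclideanSpace ℝ (Fin d)) (n i : ℕ)
    (h : (BGY d v n).1 i = 1 ∨ (BGY d v n).1 i = -1) :
    BGeps d v i = (BGY d v n).1 i := by
  classical
  have hex : ∃ m, ((BGY d v m).1 i = 1 ∨ (BGY d v m).1 i = -1) := ⟨n, h⟩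
  rw [BGeps, dif_pos hex]
  have hfind := Nat.find_spec hex
  have hle : Nat.find hex ≤ n := Nat.find_le h
  exact (BGY_persist_le d v hle hfind).symm

lemma BG_main (d : ℕ) (v : ℕ → EuclideanSpace ℝ (Fin d)) (ρ : ℝ) (hρ : 0 ≤ ρ)
    (hv : ∀ i, ‖v i‖ ≤ ρ) :
    ∃ ε : ℕ → ℝ, (∀ i, ε i = 1 ∨ ε i = -1) ∧
      ∀ n, ‖∑ i ∈ Finset.range n, ε i • v i‖ ≤ 2 * d * ρ := by
  classical
  refine ⟨BGeps d v, BGeps_sign d v, ?_⟩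
  intro n
  obtain ⟨h1, h2, h3, h4⟩ := (BGY d v n).2
  set y : ℕ → ℝ := (BGY d v n).1 with hy
  have key : ∑ i ∈ Finset.range n, BGeps d v i • v i
      = ∑ i ∈ Finset.range n, (BGeps d v i - y i) • v i := by
    have : ∑ i ∈ Finset.range n, (BGeps d v i - y i) • v i
        = ∑ i ∈ Finset.range n, BGeps d v i • v i - ∑ i ∈ Finset.range n, y i • v i := by
      rw [← Finset.sum_sub_distrib]
      exact Finset.sum_congr rfl fun i _ => by rw [sub_smul]
    rw [this, h3, sub_zero]
  rw [key, ← Finset.sum_filter_add_sum_filter_not (Finset.range n)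
      (fun i => y i = 1 ∨ y i = -1)]
  have hfirst : ∑ i ∈ (Finset.range n).filter (fun i => y i = 1 ∨ y i = -1),
      (BGeps d v i - y i) • v i = 0 := by
    apply Finset.sum_eq_zero
    intro i hi
    have := BGeps_agree d v n i (Finset.mem_filter.mp hi).2
    rw [this, sub_self, zero_smul]
  rw [hfirst, zero_add]
  calc ‖∑ i ∈ (Finset.range n).filter (fun i => ¬(y i = 1 ∨ y i = -1)),
        (BGeps d v i - y i) • v i‖
      ≤ ∑ i ∈ (Finset.range n).filter (fun i => ¬(y i = 1 ∨ y i = -1)),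
        ‖(BGeps d v i - y i) • v i‖ := norm_sum_le _ _
    _ ≤ ((Finset.range n).filter (fun i => ¬(y i = 1 ∨ y i = -1))).card • (2 * ρ) := by
        apply Finset.sum_le_card_nsmul
        intro i _
        rw [norm_smul, Real.norm_eq_abs]
        have hε : |BGeps d v i| ≤ 1 := by
          rcases BGeps_sign d v i with h | h <;> rw [h] <;> norm_num
        have : |BGeps d v i - y i| ≤ 2 := by
          have := h1 i
          have := abs_sub (BGeps d v i) (y i)
          calc |BGeps d v i - y i| ≤ |BGeps d v i| + |y i| := abs_sub _ _
            _ ≤ 2 := by linarith [h1 i]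
        exact mul_le_mul this (hv i) (norm_nonneg _) (by norm_num)
    _ ≤ d • (2 * ρ) := by
        apply nsmul_le_nsmul_left (by positivity) h4
    _ = 2 * d * ρ := by
        rw [nsmul_eq_mul]; ring



def blockN (c : ℕ → ℕ) : ℕ → ℕ
  | 0 => 0
  | k+1 => max (blockN c k + 1) (c (k+1))

lemma blockN_lt (c : ℕ → ℕ) (k : ℕ) : blockN c k < blockN c (k+1) := by
  simp [blockN]

lemma blockN_mono (c : ℕ → ℕ) : StrictMono (blockN c) :=
  strictMono_nat_of_lt_succ (blockN_lt c)

lemma blockN_le_self (c : ℕ → ℕ) (k : ℕ) : k ≤ blockN c k := by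
  induction k with
  | zero => simp [blockN]
  | succ m ih => have := blockN_lt c m; omega

def blockIdx (c : ℕ → ℕ) (n : ℕ) : ℕ := Nat.findGreatest (fun k => blockN c k ≤ n) n

lemma blockIdx_spec (c : ℕ → ℕ) (n : ℕ) : blockN c (blockIdx c n) ≤ n :=
  Nat.findGreatest_spec (P := fun k => blockN c k ≤ n) (Nat.zero_le n) (by simp [blockN])

lemma le_blockIdx (c : ℕ → ℕ) {k n : ℕ} (h : blockN c k ≤ n) : k ≤ blockIdx c n :=
  Nat.le_findGreatest (le_trans (blockN_le_self c k) h) h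

lemma blockIdx_lt (c : ℕ → ℕ) (n : ℕ) : n < blockN c (blockIdx c n + 1) := by
  by_contra h
  push_neg at h
  have := le_blockIdx c h
  omega

lemma blockIdx_blockN (c : ℕ → ℕ) (k : ℕ) : blockIdx c (blockN c k) = k := by
  have h1 := le_blockIdx c (le_refl (blockN c k))
  have h2 := blockIdx_lt c (blockN c k)
  by_contra hne
  have hlt : k < blockIdx c (blockN c k) := by omega
  have := blockN_mono c hlt
  have h3 := blockIdx_spec c (blockN c k)
  omega

lemma blockIdx_mono (c : ℕ → ℕ) : Monotone (blockIdx c) := by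
  intro m n hmn
  exact le_blockIdx c (le_trans (blockIdx_spec c m) hmn)

lemma blockSum_decomp {E : Type*} [AddCommMonoid E] (c : ℕ → ℕ) (g : ℕ → ℕ → E) (n : ℕ) :
    ∑ i ∈ range n, g (blockIdx c i) (i - blockN c (blockIdx c i))
      = (∑ j ∈ range (blockIdx c n), ∑ i ∈ range (blockN c (j+1) - blockN c j), g j i)
        + ∑ i ∈ range (n - blockN c (blockIdx c n)), g (blockIdx c n) i := by
  induction n with
  | zero =>
    have h0 : blockIdx c 0 = 0 := by
      have := blockIdx_blockN c 0
      simpa [blockN] using this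
    simp [h0]
  | succ n ih =>
    rw [Finset.sum_range_succ, ih]
    by_cases hcase : blockIdx c (n+1) = blockIdx c n
    · have hle : blockN c (blockIdx c n) ≤ n := blockIdx_spec c n
      rw [hcase]
      have harith : (n+1) - blockN c (blockIdx c n) = (n - blockN c (blockIdx c n)) + 1 := by
        omega
      rw [harith, Finset.sum_range_succ, add_assoc]
    · have hmono := blockIdx_mono c (Nat.le_succ n)
      have hlt : blockIdx c n < blockIdx c (n+1) := lt_of_le_of_ne hmono (Ne.symm hcase)
      have hN1 : blockN c (blockIdx c (n+1)) = n + 1 := by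
        have h1 := blockIdx_spec c (n+1)
        by_contra h
        have h2 : blockN c (blockIdx c (n+1)) ≤ n := by omega
        have := le_blockIdx c h2
        omega
      have hN2 : blockN c (blockIdx c n + 1) = n + 1 := by
        have h1 := blockIdx_lt c n
        have h2 : blockN c (blockIdx c n + 1) ≤ blockN c (blockIdx c (n+1)) :=
          (blockN_mono c).monotone hlt
        omega
      have hP : (n+1) - blockN c (blockIdx c (n+1)) = 0 := by omega
      rw [hP]
      have hsplit : ∑ j ∈ range (blockIdx c (n+1)),
            ∑ i ∈ range (blockN c (j+1) - blockN c j), g j i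
          = (∑ j ∈ range (blockIdx c n), ∑ i ∈ range (blockN c (j+1) - blockN c j), g j i)
            + ∑ j ∈ Ico (blockIdx c n) (blockIdx c (n+1)),
              ∑ i ∈ range (blockN c (j+1) - blockN c j), g j i := by
        rw [← Finset.sum_range_add_sum_Ico _ (le_of_lt hlt)]
      have hmid : ∑ j ∈ Ico (blockIdx c n) (blockIdx c (n+1)),
            ∑ i ∈ range (blockN c (j+1) - blockN c j), g j i
          = ∑ i ∈ range (blockN c (blockIdx c n + 1) - blockN c (blockIdx c n)),
              g (blockIdx c n) i := by
        apply Finset.sum_eq_single_of_mem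
        · exact Finset.mem_Ico.mpr ⟨le_refl _, hlt⟩
        · intro j hj hne
          rw [Finset.mem_Ico] at hj
          have hj1 : blockIdx c n + 1 ≤ j := by omega
          have h1 : blockN c (blockIdx c n + 1) ≤ blockN c j := (blockN_mono c).monotone hj1
          have h2 : blockN c j < blockN c (blockIdx c (n+1)) := blockN_mono c hj.2
          have h3 : blockN c j < blockN c (j+1) := blockN_lt c j
          have h4 : blockN c (j+1) ≤ blockN c (blockIdx c (n+1)) :=
            (blockN_mono c).monotone hj.2
          omega
      have hT : ∑ i ∈ range (blockN c (blockIdx c n + 1) - blockN c (blockIdx c n)),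
            g (blockIdx c n) i
          = (∑ i ∈ range (n - blockN c (blockIdx c n)), g (blockIdx c n) i)
            + g (blockIdx c n) (n - blockN c (blockIdx c n)) := by
        have hspec := blockIdx_spec c n
        have hlen : blockN c (blockIdx c n + 1) - blockN c (blockIdx c n)
            = (n - blockN c (blockIdx c n)) + 1 := by omega
        rw [hlen, Finset.sum_range_succ]
      rw [hsplit, hmid, hT]
      simp [add_assoc]

open Filter


section MainProof

/-- For any null sequence `(aₙ)` in `ℝ^d` there is a sign sequence `ε ∈ {-1,1}^ℕ` such that
`∑ εₙ aₙ` converges, and moreover all partial sums are bounded by `K(d) · sup ‖aₙ‖`. -/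
theorem stmt1 (d : ℕ) :
    ∃ K : ℝ, 0 < K ∧ ∀ a : ℕ → EuclideanSpace ℝ (Fin d),
      Tendsto a atTop (nhds 0) →
      ∃ ε : ℕ → ℝ, (∀ n, ε n = 1 ∨ ε n = -1) ∧
        (∃ L : EuclideanSpace ℝ (Fin d),
          Tendsto (fun N => ∑ n ∈ Finset.range N, ε n • a n) atTop (nhds L)) ∧
        ∀ (N : ℕ) (M : ℝ), (∀ n, ‖a n‖ ≤ M) →
          ‖∑ n ∈ Finset.range N, ε n • a n‖ ≤ K * M := by
  refine ⟨8 * (d + 1), by positivity, ?_⟩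
  intro a ha
  have hnorm : Tendsto (fun n => ‖a n‖) atTop (nhds 0) := by
    simpa using ha.norm
  have hbdd : BddAbove (Set.range fun n => ‖a n‖) := hnorm.bddAbove_range
  set B := ⨆ n, ‖a n‖ with hBdef
  have hBle : ∀ n, ‖a n‖ ≤ B := fun n => le_ciSup hbdd n
  have hB0 : (0:ℝ) ≤ B := le_trans (norm_nonneg _) (hBle 0)
  by_cases hBzero : B = 0
  · have hz : ∀ n, a n = 0 := fun n => norm_le_zero_iff.mp (hBzero ▸ hBle n)
    refine ⟨fun _ => 1, fun _ => Or.inl rfl, ⟨0, ?_⟩, ?_⟩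
    · exact Tendsto.congr (fun N => by simp [hz])
        (tendsto_const_nhds : Tendsto (fun _ : ℕ => (0 : EuclideanSpace ℝ (Fin d))) atTop (nhds 0))
    · intro N M hM
      have hM0 : (0:ℝ) ≤ M := le_trans (norm_nonneg (a 0)) (hM 0)
      have : ∑ n ∈ Finset.range N, (1:ℝ) • a n = 0 := by simp [hz]
      rw [this, norm_zero]
      positivity
  · have hBpos : (0:ℝ) < B := lt_of_le_of_ne hB0 (Ne.symm hBzero)
    have hexist : ∀ k : ℕ, ∃ N₀ : ℕ, ∀ n, N₀ ≤ n → ‖a n‖ ≤ B * (1/2)^k := by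
      intro k
      have hpos : (0:ℝ) < B * (1/2)^k := by positivity
      obtain ⟨N₀, hN₀⟩ := Metric.tendsto_atTop.mp hnorm (B * (1/2)^k) hpos
      refine ⟨N₀, fun n hn => ?_⟩
      have := hN₀ n hn
      rw [Real.dist_eq, sub_zero, abs_of_nonneg (norm_nonneg _)] at this
      exact this.le
    choose c hc using hexist
    have hNprop : ∀ k n, blockN c k ≤ n → ‖a n‖ ≤ B * (1/2)^k := by
      intro k n hkn
      cases k with
      | zero => simpa using hBle n
      | succ m =>
        apply hc (m+1) n
        have hcm : c (m+1) ≤ blockN c (m+1) := by simp [blockN]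
        omega
    have hblock : ∀ k, ∃ ε : ℕ → ℝ, (∀ i, ε i = 1 ∨ ε i = -1) ∧
        ∀ n, ‖∑ i ∈ Finset.range n, ε i • a (blockN c k + i)‖ ≤ 2 * d * (B * (1/2)^k) :=
      fun k => BG_main d (fun i => a (blockN c k + i)) (B * (1/2)^k) (by positivity)
        (fun i => hNprop k _ (Nat.le_add_right _ _))
    choose εb hεbsign hεbbound using hblock
    set ε : ℕ → ℝ := fun n => εb (blockIdx c n) (n - blockN c (blockIdx c n)) with hεdef
    have hsign : ∀ n, ε n = 1 ∨ ε n = -1 := fun n => hεbsign _ _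
    set T : ℕ → EuclideanSpace ℝ (Fin d) := fun j =>
      ∑ i ∈ Finset.range (blockN c (j+1) - blockN c j), εb j i • a (blockN c j + i) with hTdef
    set P : ℕ → EuclideanSpace ℝ (Fin d) := fun n =>
      ∑ i ∈ Finset.range (n - blockN c (blockIdx c n)),
        εb (blockIdx c n) i • a (blockN c (blockIdx c n) + i) with hPdef
    have hdecomp : ∀ n, ∑ i ∈ Finset.range n, ε i • a i
        = (∑ j ∈ Finset.range (blockIdx c n), T j) + P n := by
      intro n
      have key := blockSum_decomp c (fun k i => εb k i • a (blockN c k + i)) n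
      have h2 : ∀ i : ℕ, blockN c (blockIdx c i) + (i - blockN c (blockIdx c i)) = i := by
        intro i
        have := blockIdx_spec c i
        omega
      rw [hTdef, hPdef, ← key]
      apply Finset.sum_congr rfl
      intro i _
      rw [hεdef]
      simp only
      rw [h2 i]
    have hTb : ∀ j, ‖T j‖ ≤ 2 * d * (B * (1/2)^j) := fun j => hεbbound j _
    have hPb : ∀ n, ‖P n‖ ≤ 2 * d * (B * (1/2)^(blockIdx c n)) := fun n => hεbbound _ _
    have hdB : (0:ℝ) ≤ 2 * d * B := by positivity
    have hSb : ∀ n, ‖∑ i ∈ Finset.range n, ε i • a i‖ ≤ 6 * d * B := by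
      intro n
      rw [hdecomp n]
      have h1 : ‖∑ j ∈ Finset.range (blockIdx c n), T j‖
          ≤ ∑ j ∈ Finset.range (blockIdx c n), 2 * d * (B * (1/2)^j) :=
        le_trans (norm_sum_le _ _) (Finset.sum_le_sum fun j _ => hTb j)
      have h2 : ∑ j ∈ Finset.range (blockIdx c n), 2 * (d:ℝ) * (B * (1/2)^j)
          = 2 * d * B * ∑ j ∈ Finset.range (blockIdx c n), (1/2)^j := by
        rw [Finset.mul_sum]
        exact Finset.sum_congr rfl fun j _ => by ring
      have h3 : ∑ j ∈ Finset.range (blockIdx c n), ((1:ℝ)/2)^j ≤ 2 :=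
        sum_geometric_two_le _
      have h4 : ((1:ℝ)/2)^(blockIdx c n) ≤ 1 :=
        pow_le_one₀ (by norm_num) (by norm_num)
      have h5 : ‖P n‖ ≤ 2 * d * B := by
        calc ‖P n‖ ≤ 2 * d * (B * (1/2)^(blockIdx c n)) := hPb n
          _ ≤ 2 * d * (B * 1) := by
              apply mul_le_mul_of_nonneg_left _ (by positivity)
              exact mul_le_mul_of_nonneg_left h4 hB0
          _ = 2 * d * B := by ring
      have h6 : ‖∑ j ∈ Finset.range (blockIdx c n), T j‖ ≤ 2 * d * B * 2 := by
        rw [h2] at h1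
        exact le_trans h1 (mul_le_mul_of_nonneg_left h3 hdB)
      calc ‖(∑ j ∈ Finset.range (blockIdx c n), T j) + P n‖
          ≤ ‖∑ j ∈ Finset.range (blockIdx c n), T j‖ + ‖P n‖ := norm_add_le _ _
        _ ≤ 6 * d * B := by nlinarith
    have hcauchy : CauchySeq (fun n => ∑ i ∈ Finset.range n, ε i • a i) := by
      rw [Metric.cauchySeq_iff']
      intro δ hδ
      obtain ⟨k, hk⟩ : ∃ k : ℕ, (6 * d * B + 1) * (1/2:ℝ)^k < δ := by
        have h2 : Tendsto (fun k : ℕ => (6 * d * B + 1) * (1/2:ℝ)^k) atTop (nhds 0) := by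
          have := tendsto_pow_atTop_nhds_zero_of_lt_one
            (by norm_num : (0:ℝ) ≤ 1/2) (by norm_num : (1/2:ℝ) < 1)
          simpa using this.const_mul (6 * d * B + 1)
        exact (h2.eventually (gt_mem_nhds hδ)).exists
      refine ⟨blockN c k, fun n hn => ?_⟩
      rw [dist_eq_norm]
      have hBIk : blockIdx c (blockN c k) = k := blockIdx_blockN c k
      have hkn : k ≤ blockIdx c n := le_blockIdx c hn
      have hSNk : ∑ i ∈ Finset.range (blockN c k), ε i • a i = ∑ j ∈ Finset.range k, T j := by
        rw [hdecomp]
        rw [hBIk]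
        simp [hPdef, hBIk]
      rw [hdecomp n, hSNk]
      have hsplit : ∑ j ∈ Finset.range (blockIdx c n), T j
          = ∑ j ∈ Finset.range k, T j + ∑ j ∈ Finset.Ico k (blockIdx c n), T j :=
        (Finset.sum_range_add_sum_Ico _ hkn).symm
      rw [hsplit]
      have heq : (∑ j ∈ Finset.range k, T j + ∑ j ∈ Finset.Ico k (blockIdx c n), T j + P n)
          - ∑ j ∈ Finset.range k, T j = ∑ j ∈ Finset.Ico k (blockIdx c n), T j + P n := by
        abel
      rw [heq]
      have hIco : ‖∑ j ∈ Finset.Ico k (blockIdx c n), T j‖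
          ≤ ∑ j ∈ Finset.Ico k (blockIdx c n), 2 * d * (B * (1/2)^j) :=
        le_trans (norm_sum_le _ _) (Finset.sum_le_sum fun j _ => hTb j)
      have htail : ∑ j ∈ Finset.Ico k (blockIdx c n), (1/2:ℝ)^j ≤ 2 * (1/2)^k := by
        rw [Finset.sum_Ico_eq_sum_range]
        have hpa : ∀ i : ℕ, ((1:ℝ)/2)^(k + i) = (1/2)^k * (1/2)^i := fun i => pow_add _ _ _
        simp_rw [hpa]
        rw [← Finset.mul_sum]
        have hgeo := sum_geometric_two_le (blockIdx c n - k)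
        have hpk : (0:ℝ) ≤ (1/2:ℝ)^k := by positivity
        nlinarith
      have hIco2 : ∑ j ∈ Finset.Ico k (blockIdx c n), 2 * (d:ℝ) * (B * (1/2)^j)
          = 2 * d * B * ∑ j ∈ Finset.Ico k (blockIdx c n), (1/2)^j := by
        rw [Finset.mul_sum]
        exact Finset.sum_congr rfl fun j _ => by ring
      have hPk : ((1:ℝ)/2)^(blockIdx c n) ≤ (1/2)^k :=
        pow_le_pow_of_le_one (by norm_num) (by norm_num) hkn
      have hP2 : ‖P n‖ ≤ 2 * d * B * (1/2)^k := by
        calc ‖P n‖ ≤ 2 * d * (B * (1/2)^(blockIdx c n)) := hPb n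
          _ ≤ 2 * d * (B * (1/2)^k) := by
              apply mul_le_mul_of_nonneg_left _ (by positivity)
              exact mul_le_mul_of_nonneg_left hPk hB0
          _ = 2 * d * B * (1/2)^k := by ring
      have hI3 : ‖∑ j ∈ Finset.Ico k (blockIdx c n), T j‖ ≤ 2 * d * B * (2 * (1/2)^k) := by
        rw [hIco2] at hIco
        exact le_trans hIco (mul_le_mul_of_nonneg_left htail hdB)
      calc ‖∑ j ∈ Finset.Ico k (blockIdx c n), T j + P n‖
          ≤ ‖∑ j ∈ Finset.Ico k (blockIdx c n), T j‖ + ‖P n‖ := norm_add_le _ _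
        _ ≤ 2 * d * B * (2 * (1/2)^k) + 2 * d * B * (1/2)^k := add_le_add hI3 hP2
        _ = 6 * d * B * (1/2)^k := by ring
        _ ≤ (6 * d * B + 1) * (1/2)^k := by
            have hpk : (0:ℝ) ≤ (1/2:ℝ)^k := by positivity
            nlinarith
        _ < δ := hk
    obtain ⟨L, hL⟩ := cauchySeq_tendsto_of_complete hcauchy
    refine ⟨ε, hsign, ⟨L, hL⟩, ?_⟩
    intro N M hM
    have hBM : B ≤ M := ciSup_le hM
    have hM0 : (0:ℝ) ≤ M := le_trans hB0 hBM
    have hd0 : (0:ℝ) ≤ 6 * d := by positivity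
    calc ‖∑ n ∈ Finset.range N, ε n • a n‖ ≤ 6 * d * B := hSb N
      _ ≤ 6 * d * M := by
          rw [mul_assoc, mul_assoc]
          exact mul_le_mul_of_nonneg_left (by
            exact mul_le_mul_of_nonneg_left hBM (Nat.cast_nonneg d)) (by norm_num)
      _ ≤ 8 * (d + 1) * M := by
          apply mul_le_mul_of_nonneg_right _ hM0
          have := Nat.cast_nonneg (α := ℝ) d
          linarith

end MainProof
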